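/- Specialization to JSD: for probability measures P ≪≫ M (mutually absolutely continuous where M = (P+Q)/2) and any measurable T : Ω → ℝ, the unnormalized Jensen–Shannon divergence satisfies KL(P‖M) + KL(Q‖M) ≥ E_P[log 2 - sp(-T)] - E_Q[sp(T) - log 2] = E_P[-sp(-T)] - E_Q[sp(T)] + log 4, provided the expectations exist. -/

import Mathlib

open MeasureTheory
open scoped ENNReal

noncomputable def sp (z : ℝ) : ℝ := Real.log (1 + Real.exp z)

noncomputable def klDiv {Ω : Type*} [MeasurableSpace Ω] (P Q : Measure Ω) : ℝ :=
  ∫ x, Real.log (P.rnDeriv Q x).toReal ∂P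

lemma sp_nonneg (z : ℝ) : 0 ≤ sp z :=
  Real.log_nonneg (by linarith [Real.exp_pos z])

lemma sp_mono {z w : ℝ} (h : z ≤ w) : sp z ≤ sp w := by
  unfold sp
  have h1 : (0:ℝ) < 1 + Real.exp z := by positivity
  gcongr

lemma aux_log (a b : ℝ) (ha : 0 ≤ a) (hb : 0 < b) :
    a - b ≤ a * Real.log a - a * Real.log b := by
  rcases eq_or_lt_of_le ha with h | h
  · simp [← h]; positivity
  · have h1 : Real.log (b / a) ≤ b / a - 1 := Real.log_le_sub_one_of_pos (by positivity)
    have h2 : Real.log (b / a) = Real.log b - Real.log a := Real.log_div (ne_of_gt hb) (ne_of_gt h)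
    have h3 : a * Real.log (b / a) ≤ a * (b / a - 1) :=
      mul_le_mul_of_nonneg_left h1 ha
    rw [h2] at h3
    have h4 : a * (b / a - 1) = b - a := by field_simp
    nlinarith

lemma ptwise (p q t : ℝ) (hp : 0 ≤ p) (hq : 0 ≤ q) (hpq : p + q = 2) :
    p * (Real.log 2 - sp (-t)) + q * (Real.log 2 - sp t)
      ≤ p * Real.log p + q * Real.log q := by
  set D : ℝ := (1 + Real.exp (-t))⁻¹ with hD
  have hDpos : 0 < D := by positivity
  have hexp : (0:ℝ) < Real.exp (-t) := Real.exp_pos _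
  have hDlt : D < 1 := by
    rw [hD, inv_lt_one_iff₀]; right; linarith
  have h1 : Real.log 2 - sp (-t) = Real.log (2 * D) := by
    rw [Real.log_mul (by norm_num) (ne_of_gt hDpos), hD, Real.log_inv, sp]; ring
  have h2 : Real.log 2 - sp t = Real.log (2 * (1 - D)) := by
    have h1D : 1 - D = Real.exp (-t) * (1 + Real.exp (-t))⁻¹ := by
      rw [hD]; field_simp; ring
    have hsp : sp t = t + sp (-t) := by
      unfold sp
      rw [← Real.log_exp t, ← Real.log_mul (by positivity) (by positivity)]
      congr 1
      rw [Real.exp_neg]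
      have := Real.exp_pos t
      field_simp
      rw [Real.exp_log this]; ring
    rw [Real.log_mul (by norm_num) (by rw [h1D]; positivity), h1D,
      Real.log_mul (by positivity) (by positivity), Real.log_exp, Real.log_inv, hsp, sp]
    ring
  rw [h1, h2]
  have hA := aux_log p (2 * D) hp (by positivity)
  have hB := aux_log q (2 * (1 - D)) hq (by nlinarith)
  nlinarith

lemma xlogx_bound (x : ℝ) (h0 : 0 ≤ x) (h2 : x ≤ 2) : |x * Real.log x| ≤ 2 := by
  rcases le_or_gt x 1 with h | h
  · rcases eq_or_lt_of_le h0 with h' | h'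
    · simp [← h']
    · have hlog : Real.log x ≤ 0 := Real.log_nonpos h0 h
      have h1 : Real.log x⁻¹ ≤ x⁻¹ - 1 := Real.log_le_sub_one_of_pos (by positivity)
      have h3 : x * Real.log x⁻¹ ≤ x * (x⁻¹ - 1) := mul_le_mul_of_nonneg_left h1 h0
      have h4 : x * (x⁻¹ - 1) = 1 - x := by field_simp
      have h5 : x * Real.log x⁻¹ = -(x * Real.log x) := by rw [Real.log_inv]; ring
      rw [abs_of_nonpos (mul_nonpos_of_nonneg_of_nonpos h0 hlog)]
      nlinarith
  · have hlog0 : 0 ≤ Real.log x := Real.log_nonneg h.le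
    have hlog2 : Real.log x ≤ 1 := by
      have := Real.log_le_sub_one_of_pos (show (0:ℝ) < x by linarith)
      linarith
    rw [abs_of_nonneg (by positivity)]
    nlinarith

theorem stmt_15 {Ω : Type*} [MeasurableSpace Ω] (P Q : Measure Ω)
    [IsProbabilityMeasure P] [IsProbabilityMeasure Q]
    (M : Measure Ω) (hM : M = (2 : ℝ≥0∞)⁻¹ • (P + Q))
    (hPM : P ≪ M) (hMP : M ≪ P) (hQM : Q ≪ M) (hMQ : M ≪ Q)
    (T : Ω → ℝ) (hT : Measurable T) (C : ℝ) (hbdd : ∀ x, |T x| ≤ C) :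
    ((∫ x, (Real.log 2 - sp (-(T x))) ∂P) - ∫ x, (sp (T x) - Real.log 2) ∂Q
      ≤ klDiv P M + klDiv Q M) ∧
    (∫ x, (Real.log 2 - sp (-(T x))) ∂P) - (∫ x, (sp (T x) - Real.log 2) ∂Q)
      = (∫ x, -sp (-(T x)) ∂P) - (∫ x, sp (T x) ∂Q) + Real.log 4 := by
  have hspcont : Continuous sp := by
    unfold sp
    exact (continuous_const.add Real.continuous_exp).log (fun z => (by positivity : (0:ℝ) < 1 + Real.exp z).ne')
  haveI hMprob : IsProbabilityMeasure M := by
    constructor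
    rw [hM]
    rw [Measure.smul_apply, Measure.add_apply, measure_univ, measure_univ, smul_eq_mul,
      one_add_one_eq_two, ENNReal.inv_mul_cancel two_ne_zero ENNReal.ofNat_ne_top]
  -- bounded measurable functions are integrable
  have hint : ∀ (μ : Measure Ω), IsFiniteMeasure μ → ∀ (f : Ω → ℝ) (B : ℝ),
      Measurable f → (∀ᵐ x ∂μ, |f x| ≤ B) → Integrable f μ := by
    intro μ hμ f B hf hB
    exact (integrable_const B).mono' hf.aestronglyMeasurable
      (by simpa [Real.norm_eq_abs] using hB)
  have hbound : ∀ x, |sp (T x)| ≤ sp C ∧ |sp (-(T x))| ≤ sp C := fun x => by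
    have h1 := abs_le.1 (hbdd x)
    refine ⟨?_, ?_⟩
    · rw [abs_of_nonneg (sp_nonneg _)]; exact sp_mono h1.2
    · rw [abs_of_nonneg (sp_nonneg _)]; exact sp_mono (by linarith [h1.1])
  -- p + q = 2 a.e.
  have h2M : P + Q = (2 : ℝ≥0∞) • M := by
    rw [hM, smul_smul, ENNReal.mul_inv_cancel two_ne_zero ENNReal.ofNat_ne_top, one_smul]
  have hsum : ∀ᵐ x ∂M, (P.rnDeriv M x).toReal + (Q.rnDeriv M x).toReal = 2 := by
    have ha : (P + Q).rnDeriv M =ᵐ[M] P.rnDeriv M + Q.rnDeriv M := Measure.rnDeriv_add P Q M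
    have hb : ((2 : ℝ≥0∞) • M).rnDeriv M =ᵐ[M] (2 : ℝ≥0∞) • M.rnDeriv M :=
      Measure.rnDeriv_smul_left_of_ne_top M M ENNReal.ofNat_ne_top
    have hc : M.rnDeriv M =ᵐ[M] fun _ => 1 := Measure.rnDeriv_self M
    rw [h2M] at ha
    filter_upwards [ha, hb, hc] with x ha' hb' hc'
    have key : P.rnDeriv M x + Q.rnDeriv M x = 2 := by
      have : (P.rnDeriv M + Q.rnDeriv M) x = ((2 : ℝ≥0∞) • M.rnDeriv M) x := by
        rw [← ha', hb']
      simpa [hc'] using this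
    have hfp : P.rnDeriv M x ≠ ⊤ := by
      intro h; rw [h, top_add] at key; exact ENNReal.ofNat_ne_top key.symm
    have hfq : Q.rnDeriv M x ≠ ⊤ := by
      intro h; rw [h, add_top] at key; exact ENNReal.ofNat_ne_top key.symm
    rw [← ENNReal.toReal_add hfp hfq, key]
    norm_num
  have hp0 : ∀ x, (0:ℝ) ≤ (P.rnDeriv M x).toReal := fun x => ENNReal.toReal_nonneg
  have hq0 : ∀ x, (0:ℝ) ≤ (Q.rnDeriv M x).toReal := fun x => ENNReal.toReal_nonneg
  have hpm : Measurable fun x => (P.rnDeriv M x).toReal :=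
    (Measure.measurable_rnDeriv P M).ennreal_toReal
  have hqm : Measurable fun x => (Q.rnDeriv M x).toReal :=
    (Measure.measurable_rnDeriv Q M).ennreal_toReal
  -- integrability over M
  have habs : ∀ x, |Real.log 2 - sp (-(T x))| ≤ |Real.log 2| + sp C := fun x => by
    have hs := abs_le.1 (hbound x).2
    have h2 := le_abs_self (Real.log 2)
    have h3 := neg_abs_le (Real.log 2)
    rw [abs_le]; constructor <;> linarith [hs.1, hs.2]
  have habs' : ∀ x, |Real.log 2 - sp (T x)| ≤ |Real.log 2| + sp C := fun x => by
    have hs := abs_le.1 (hbound x).1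
    have h2 := le_abs_self (Real.log 2)
    have h3 := neg_abs_le (Real.log 2)
    rw [abs_le]; constructor <;> linarith [hs.1, hs.2]
  have iP1 : Integrable (fun x => (P.rnDeriv M x).toReal * (Real.log 2 - sp (-(T x)))) M := by
    refine hint M inferInstance _ (2 * (|Real.log 2| + sp C))
      (hpm.mul ((measurable_const.sub (hspcont.measurable.comp hT.neg)))) ?_
    filter_upwards [hsum] with x hx
    rw [abs_mul]
    have h1 : |(P.rnDeriv M x).toReal| ≤ 2 := by
      rw [abs_of_nonneg (hp0 x)]; linarith [hq0 x]
    exact mul_le_mul h1 (habs x) (abs_nonneg _) (by norm_num)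
  have iQ1 : Integrable (fun x => (Q.rnDeriv M x).toReal * (Real.log 2 - sp (T x))) M := by
    refine hint M inferInstance _ (2 * (|Real.log 2| + sp C))
      (hqm.mul ((measurable_const.sub (hspcont.measurable.comp hT)))) ?_
    filter_upwards [hsum] with x hx
    rw [abs_mul]
    have h1 : |(Q.rnDeriv M x).toReal| ≤ 2 := by
      rw [abs_of_nonneg (hq0 x)]; linarith [hp0 x]
    exact mul_le_mul h1 (habs' x) (abs_nonneg _) (by norm_num)
  have iP2 : Integrable (fun x => (P.rnDeriv M x).toReal * Real.log (P.rnDeriv M x).toReal) M := by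
    refine hint M inferInstance _ 2 (hpm.mul hpm.log) ?_
    filter_upwards [hsum] with x hx
    exact xlogx_bound _ (hp0 x) (by linarith [hq0 x])
  have iQ2 : Integrable (fun x => (Q.rnDeriv M x).toReal * Real.log (Q.rnDeriv M x).toReal) M := by
    refine hint M inferInstance _ 2 (hqm.mul hqm.log) ?_
    filter_upwards [hsum] with x hx
    exact xlogx_bound _ (hq0 x) (by linarith [hp0 x])
  -- change of measure
  have eP1 : ∫ x, (Real.log 2 - sp (-(T x))) ∂P
      = ∫ x, (P.rnDeriv M x).toReal * (Real.log 2 - sp (-(T x))) ∂M := by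
    rw [← integral_rnDeriv_smul hPM]
    simp_rw [smul_eq_mul]
  have eQ1 : ∫ x, (Real.log 2 - sp (T x)) ∂Q
      = ∫ x, (Q.rnDeriv M x).toReal * (Real.log 2 - sp (T x)) ∂M := by
    rw [← integral_rnDeriv_smul hQM]
    simp_rw [smul_eq_mul]
  have eKLP : klDiv P M = ∫ x, (P.rnDeriv M x).toReal * Real.log (P.rnDeriv M x).toReal ∂M := by
    rw [klDiv, ← integral_rnDeriv_smul hPM (f := fun x => Real.log (P.rnDeriv M x).toReal)]
    simp_rw [smul_eq_mul]
  have eKLQ : klDiv Q M = ∫ x, (Q.rnDeriv M x).toReal * Real.log (Q.rnDeriv M x).toReal ∂M := by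
    rw [klDiv, ← integral_rnDeriv_smul hQM (f := fun x => Real.log (Q.rnDeriv M x).toReal)]
    simp_rw [smul_eq_mul]
  -- key inequality
  have key : ∫ x, (P.rnDeriv M x).toReal * (Real.log 2 - sp (-(T x))) ∂M
        + ∫ x, (Q.rnDeriv M x).toReal * (Real.log 2 - sp (T x)) ∂M
      ≤ ∫ x, (P.rnDeriv M x).toReal * Real.log (P.rnDeriv M x).toReal ∂M
        + ∫ x, (Q.rnDeriv M x).toReal * Real.log (Q.rnDeriv M x).toReal ∂M := by
    rw [← integral_add iP1 iQ1, ← integral_add iP2 iQ2]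
    refine integral_mono_ae (iP1.add iQ1) (iP2.add iQ2) ?_
    filter_upwards [hsum] with x hx
    exact ptwise _ _ _ (hp0 x) (hq0 x) hx
  have hBneg : ∫ x, (sp (T x) - Real.log 2) ∂Q = - ∫ x, (Real.log 2 - sp (T x)) ∂Q := by
    rw [← integral_neg]
    simp [neg_sub]
  -- second conjunct pieces
  have iPsp : Integrable (fun x => sp (-(T x))) P :=
    hint P inferInstance _ (sp C) (hspcont.measurable.comp hT.neg)
      (Filter.Eventually.of_forall fun x => (hbound x).2)
  have iQsp : Integrable (fun x => sp (T x)) Q :=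
    hint Q inferInstance _ (sp C) (hspcont.measurable.comp hT)
      (Filter.Eventually.of_forall fun x => (hbound x).1)
  have e1 : ∫ x, (Real.log 2 - sp (-(T x))) ∂P = Real.log 2 - ∫ x, sp (-(T x)) ∂P := by
    rw [integral_sub (integrable_const _) iPsp, integral_const]; simp
  have e2 : ∫ x, (sp (T x) - Real.log 2) ∂Q = (∫ x, sp (T x) ∂Q) - Real.log 2 := by
    rw [integral_sub iQsp (integrable_const _), integral_const]; simp
  have e3 : ∫ x, -sp (-(T x)) ∂P = - ∫ x, sp (-(T x)) ∂P := integral_neg _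
  have e4 : Real.log 4 = Real.log 2 + Real.log 2 := by
    rw [← Real.log_mul (by norm_num) (by norm_num)]; norm_num
  constructor
  · rw [eP1, hBneg, eQ1, eKLP, eKLQ]
    linarith [key]
  · rw [e1, e2, e3, e4]; ring
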